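/- Let K be the field of fractions of ℚ[x₀,x₁,x₂,x₃,x₄,x₅], set A = (x₂x₄+x₃x₅)/(x₀x₁), B = (x₁x₄+x₀x₅)/(x₂x₃), C = (x₀x₂+x₁x₃)/(x₄x₅), let τ'₁, τ'₂, τ'₃ be the maps on K⁶ defined by: τ'₁ replaces (v₀,v₁) by ((v₂v₄+v₃v₅)/v₁, (v₂v₄+v₃v₅)/v₀); τ'₂ replaces (v₂,v₃) by ((v₁v₄+v₀v₅)/v₃, (v₁v₄+v₀v₅)/v₂); τ'₃ replaces (v₄,v₅) by ((v₀v₂+v₁v₃)/v₅, (v₀v₂+v₁v₃)/v₄); each fixes the remaining entries. Let Φ = τ'₃∘τ'₂∘τ'₁ and X = (x₀,…,x₅). Then for every natural number m, Φ^{2m}(X) = (x₀A^{3m²}B^{3m²−m}C^{3m²−2m}, x₁A^{3m²}B^{3m²−m}C^{3m²−2m}, x₂A^{3m²+m}B^{3m²}C^{3m²−m}, x₃A^{3m²+m}B^{3m²}C^{3m²−m}, x₄A^{3m²+2m}B^{3m²+m}C^{3m²}, x₅A^{3m²+2m}B^{3m²+m}C^{3m²}). -/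

import Mathlib

noncomputable section

/-- The polynomial ring ℚ[x₀,…,x₅]. -/
abbrev P : Type := MvPolynomial (Fin 6) ℚ

/-- K = Frac(ℚ[x₀,…,x₅]). -/
abbrev K : Type := FractionRing P

/-- The images of the variables x₀,…,x₅ in K. -/
def x (i : Fin 6) : K := algebraMap P K (MvPolynomial.X i)

/-- τ'₁ : replaces (v₀, v₁) by ((v₂v₄+v₃v₅)/v₁, (v₂v₄+v₃v₅)/v₀). -/
def tau1 (v : Fin 6 → K) : Fin 6 → K := fun k =>
  if k = 0 then (v 2 * v 4 + v 3 * v 5) / v 1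
  else if k = 1 then (v 2 * v 4 + v 3 * v 5) / v 0
  else v k

/-- τ'₂ : replaces (v₂, v₃) by ((v₁v₄+v₀v₅)/v₃, (v₁v₄+v₀v₅)/v₂). -/
def tau2 (v : Fin 6 → K) : Fin 6 → K := fun k =>
  if k = 2 then (v 1 * v 4 + v 0 * v 5) / v 3
  else if k = 3 then (v 1 * v 4 + v 0 * v 5) / v 2
  else v k

/-- τ'₃ : replaces (v₄, v₅) by ((v₀v₂+v₁v₃)/v₅, (v₀v₂+v₁v₃)/v₄). -/
def tau3 (v : Fin 6 → K) : Fin 6 → K := fun k =>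
  if k = 4 then (v 0 * v 2 + v 1 * v 3) / v 5
  else if k = 5 then (v 0 * v 2 + v 1 * v 3) / v 4
  else v k

/-- τ' indexed by Fin 3: `tau i` is τ'_{i+1}. -/
def tau : Fin 3 → (Fin 6 → K) → (Fin 6 → K)
  | 0 => tau1
  | 1 => tau2
  | 2 => tau3

/-- The initial labeled seed X = (x₀,…,x₅). -/
def X0 : Fin 6 → K := x

/-- Apply the maps τ'₍a₁₎, …, τ'₍aₙ₎ along the word `w` in left-to-right order. -/
def applyWord (w : List (Fin 3)) (v : Fin 6 → K) : Fin 6 → K :=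
  w.foldl (fun u a => tau a u) v

/-- A = (x₂x₄+x₃x₅)/(x₀x₁). -/
def A : K := (x 2 * x 4 + x 3 * x 5) / (x 0 * x 1)

/-- B = (x₁x₄+x₀x₅)/(x₂x₃). -/
def B : K := (x 1 * x 4 + x 0 * x 5) / (x 2 * x 3)

/-- C = (x₀x₂+x₁x₃)/(x₄x₅). -/
def C : K := (x 0 * x 2 + x 1 * x 3) / (x 4 * x 5)

/-- Φ = τ'₃ ∘ τ'₂ ∘ τ'₁, one application of the mutation sequence β = 123. -/
def Phi : (Fin 6 → K) → (Fin 6 → K) := fun v => tau3 (tau2 (tau1 v))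

/- ## Auxiliary lemmas -/

lemma x_ne (i : Fin 6) : x i ≠ 0 := by
  simp [x, IsFractionRing.to_map_eq_zero_iff, MvPolynomial.X_ne_zero]

lemma num_ne (i j k l : Fin 6) : x i * x j + x k * x l ≠ 0 := by
  have hh : x i * x j + x k * x l =
      algebraMap P K (MvPolynomial.X i * MvPolynomial.X j + MvPolynomial.X k * MvPolynomial.X l) := by
    simp [x]
  rw [hh, ne_eq, IsFractionRing.to_map_eq_zero_iff]
  intro h
  have := congrArg (MvPolynomial.eval (fun _ => (1:ℚ))) h
  simp at this

lemma A_ne : A ≠ 0 := div_ne_zero (num_ne 2 4 3 5) (mul_ne_zero (x_ne 0) (x_ne 1))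
lemma B_ne : B ≠ 0 := div_ne_zero (num_ne 1 4 0 5) (mul_ne_zero (x_ne 2) (x_ne 3))
lemma C_ne : C ≠ 0 := div_ne_zero (num_ne 0 2 1 3) (mul_ne_zero (x_ne 4) (x_ne 5))

lemma hA (d e : Fin 6) (h : x 0 * x 1 = x e * x d) : x 2 * x 4 + x 3 * x 5 = A * (x e * x d) := by
  rw [← h]; exact (div_mul_cancel₀ _ (mul_ne_zero (x_ne 0) (x_ne 1))).symm
lemma hB (d e : Fin 6) (h : x 2 * x 3 = x e * x d) : x 1 * x 4 + x 0 * x 5 = B * (x e * x d) := by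
  rw [← h]; exact (div_mul_cancel₀ _ (mul_ne_zero (x_ne 2) (x_ne 3))).symm
lemma hC (d e : Fin 6) (h : x 4 * x 5 = x e * x d) : x 0 * x 2 + x 1 * x 3 = C * (x e * x d) := by
  rw [← h]; exact (div_mul_cancel₀ _ (mul_ne_zero (x_ne 4) (x_ne 5))).symm

lemma keyA (i j k l d e : Fin 6) (h : x i * x j + x k * x l = A * (x e * x d))
    (p q r s t u a b c : ℤ) :
    ((x i * A^s*B^t*C^u) * (x j * A^a*B^b*C^c) + (x k * A^s*B^t*C^u) * (x l * A^a*B^b*C^c))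
      / (x d * A^p*B^q*C^r)
    = x e * A^(s+a-p+1)*B^(t+b-q)*C^(u+c-r) := by
  have h1 : A ^ p ≠ 0 := zpow_ne_zero _ A_ne
  have h2 : B ^ q ≠ 0 := zpow_ne_zero _ B_ne
  have h3 : C ^ r ≠ 0 := zpow_ne_zero _ C_ne
  rw [div_eq_iff (mul_ne_zero (mul_ne_zero (mul_ne_zero (x_ne d) h1) h2) h3)]
  simp only [zpow_sub₀ A_ne, zpow_add₀ A_ne, zpow_sub₀ B_ne, zpow_add₀ B_ne,
    zpow_sub₀ C_ne, zpow_add₀ C_ne, zpow_one]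
  field_simp
  linear_combination (A^s*A^a*B^t*B^b*C^u*C^c) * h

lemma keyB (i j k l d e : Fin 6) (h : x i * x j + x k * x l = B * (x e * x d))
    (p q r s t u a b c : ℤ) :
    ((x i * A^s*B^t*C^u) * (x j * A^a*B^b*C^c) + (x k * A^s*B^t*C^u) * (x l * A^a*B^b*C^c))
      / (x d * A^p*B^q*C^r)
    = x e * A^(s+a-p)*B^(t+b-q+1)*C^(u+c-r) := by
  have h1 : A ^ p ≠ 0 := zpow_ne_zero _ A_ne
  have h2 : B ^ q ≠ 0 := zpow_ne_zero _ B_ne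
  have h3 : C ^ r ≠ 0 := zpow_ne_zero _ C_ne
  rw [div_eq_iff (mul_ne_zero (mul_ne_zero (mul_ne_zero (x_ne d) h1) h2) h3)]
  simp only [zpow_sub₀ A_ne, zpow_add₀ A_ne, zpow_sub₀ B_ne, zpow_add₀ B_ne,
    zpow_sub₀ C_ne, zpow_add₀ C_ne, zpow_one]
  field_simp
  linear_combination (A^s*A^a*B^t*B^b*C^u*C^c) * h

lemma keyC (i j k l d e : Fin 6) (h : x i * x j + x k * x l = C * (x e * x d))
    (p q r s t u a b c : ℤ) :
    ((x i * A^s*B^t*C^u) * (x j * A^a*B^b*C^c) + (x k * A^s*B^t*C^u) * (x l * A^a*B^b*C^c))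
      / (x d * A^p*B^q*C^r)
    = x e * A^(s+a-p)*B^(t+b-q)*C^(u+c-r+1) := by
  have h1 : A ^ p ≠ 0 := zpow_ne_zero _ A_ne
  have h2 : B ^ q ≠ 0 := zpow_ne_zero _ B_ne
  have h3 : C ^ r ≠ 0 := zpow_ne_zero _ C_ne
  rw [div_eq_iff (mul_ne_zero (mul_ne_zero (mul_ne_zero (x_ne d) h1) h2) h3)]
  simp only [zpow_sub₀ A_ne, zpow_add₀ A_ne, zpow_sub₀ B_ne, zpow_add₀ B_ne,
    zpow_sub₀ C_ne, zpow_add₀ C_ne, zpow_one]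
  field_simp
  linear_combination (A^s*A^a*B^t*B^b*C^u*C^c) * h

lemma vec_ext {w : Fin 6 → K} {a0 a1 a2 a3 a4 a5 : K}
    (h0 : w 0 = a0) (h1 : w 1 = a1) (h2 : w 2 = a2) (h3 : w 3 = a3) (h4 : w 4 = a4)
    (h5 : w 5 = a5) : w = ![a0,a1,a2,a3,a4,a5] := by
  funext k
  fin_cases k
  exacts [h0, h1, h2, h3, h4, h5]

lemma tau1_step (p q r s t u a b c : ℤ) :
    tau1 ![x 0 * A^p*B^q*C^r, x 1 * A^p*B^q*C^r, x 2 * A^s*B^t*C^u, x 3 * A^s*B^t*C^u,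
           x 4 * A^a*B^b*C^c, x 5 * A^a*B^b*C^c]
    = ![x 0 * A^(s+a-p+1)*B^(t+b-q)*C^(u+c-r), x 1 * A^(s+a-p+1)*B^(t+b-q)*C^(u+c-r),
        x 2 * A^s*B^t*C^u, x 3 * A^s*B^t*C^u, x 4 * A^a*B^b*C^c, x 5 * A^a*B^b*C^c] :=
  vec_ext
    (keyA 2 4 3 5 1 0 (hA 1 0 rfl) p q r s t u a b c)
    (keyA 2 4 3 5 0 1 (hA 0 1 (mul_comm _ _)) p q r s t u a b c)
    rfl rfl rfl rfl

lemma tau2_step (p q r s t u a b c : ℤ) :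
    tau2 ![x 0 * A^p*B^q*C^r, x 1 * A^p*B^q*C^r, x 2 * A^s*B^t*C^u, x 3 * A^s*B^t*C^u,
           x 4 * A^a*B^b*C^c, x 5 * A^a*B^b*C^c]
    = ![x 0 * A^p*B^q*C^r, x 1 * A^p*B^q*C^r,
        x 2 * A^(p+a-s)*B^(q+b-t+1)*C^(r+c-u), x 3 * A^(p+a-s)*B^(q+b-t+1)*C^(r+c-u),
        x 4 * A^a*B^b*C^c, x 5 * A^a*B^b*C^c] :=
  vec_ext rfl rfl
    (keyB 1 4 0 5 3 2 (hB 3 2 rfl) s t u p q r a b c)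
    (keyB 1 4 0 5 2 3 (hB 2 3 (mul_comm _ _)) s t u p q r a b c)
    rfl rfl

lemma tau3_step (p q r s t u a b c : ℤ) :
    tau3 ![x 0 * A^p*B^q*C^r, x 1 * A^p*B^q*C^r, x 2 * A^s*B^t*C^u, x 3 * A^s*B^t*C^u,
           x 4 * A^a*B^b*C^c, x 5 * A^a*B^b*C^c]
    = ![x 0 * A^p*B^q*C^r, x 1 * A^p*B^q*C^r, x 2 * A^s*B^t*C^u, x 3 * A^s*B^t*C^u,
        x 4 * A^(p+s-a)*B^(q+t-b)*C^(r+u-c+1), x 5 * A^(p+s-a)*B^(q+t-b)*C^(r+u-c+1)] :=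
  vec_ext rfl rfl rfl rfl
    (keyC 0 2 1 3 5 4 (hC 5 4 rfl) a b c p q r s t u)
    (keyC 0 2 1 3 4 5 (hC 4 5 (mul_comm _ _)) a b c p q r s t u)

lemma entry_congr (i : Fin 6) {e f g e' f' g' : ℤ} (he : e = e') (hf : f = f') (hg : g = g') :
    x i * A^e * B^f * C^g = x i * A^e' * B^f' * C^g' := by rw [he, hf, hg]

/-- Proposition 2.5(a): β^n applied to the initial seed for n = 2m even. -/
theorem beta_even (m : ℕ) :
    Phi^[2 * m] X0 =
      ![x 0 * A ^ (3 * (m : ℤ) ^ 2) * B ^ (3 * (m : ℤ) ^ 2 - m) * C ^ (3 * (m : ℤ) ^ 2 - 2 * m),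
        x 1 * A ^ (3 * (m : ℤ) ^ 2) * B ^ (3 * (m : ℤ) ^ 2 - m) * C ^ (3 * (m : ℤ) ^ 2 - 2 * m),
        x 2 * A ^ (3 * (m : ℤ) ^ 2 + m) * B ^ (3 * (m : ℤ) ^ 2) * C ^ (3 * (m : ℤ) ^ 2 - m),
        x 3 * A ^ (3 * (m : ℤ) ^ 2 + m) * B ^ (3 * (m : ℤ) ^ 2) * C ^ (3 * (m : ℤ) ^ 2 - m),
        x 4 * A ^ (3 * (m : ℤ) ^ 2 + 2 * m) * B ^ (3 * (m : ℤ) ^ 2 + m) * C ^ (3 * (m : ℤ) ^ 2),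
        x 5 * A ^ (3 * (m : ℤ) ^ 2 + 2 * m) * B ^ (3 * (m : ℤ) ^ 2 + m) * C ^ (3 * (m : ℤ) ^ 2)] := by
  induction m with
  | zero =>
      norm_num
      exact vec_ext rfl rfl rfl rfl rfl rfl |>.symm ▸ (by
        funext k
        fin_cases k <;> simp [X0])
  | succ m ih =>
      rw [show 2 * (m + 1) = (2 * m) + 1 + 1 by ring, Function.iterate_succ_apply',
        Function.iterate_succ_apply', ih]
      show tau3 (tau2 (tau1 (tau3 (tau2 (tau1 _))))) = _
      rw [tau1_step, tau2_step, tau3_step, tau1_step, tau2_step, tau3_step]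
      exact vec_ext
        (entry_congr 0 (by push_cast; ring) (by push_cast; ring) (by push_cast; ring))
        (entry_congr 1 (by push_cast; ring) (by push_cast; ring) (by push_cast; ring))
        (entry_congr 2 (by push_cast; ring) (by push_cast; ring) (by push_cast; ring))
        (entry_congr 3 (by push_cast; ring) (by push_cast; ring) (by push_cast; ring))
        (entry_congr 4 (by push_cast; ring) (by push_cast; ring) (by push_cast; ring))
        (entry_congr 5 (by push_cast; ring) (by push_cast; ring) (by push_cast; ring))
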